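/- Let A be an m×n real matrix (m ≤ n) of rank r, and let X⁽¹⁾,…,X⁽ˡ⁾ be independent random vectors each uniformly distributed on {±1}^n. Then for every u ∈ ℝ^m, the probability that A X⁽¹⁾ + ⋯ + A X⁽ˡ⁾ = u is at most (2^{-ℓ} C(ℓ, ⌊ℓ/2⌋))^r. -/

import Mathlib

open Finset Matrix

open scoped Classical in
noncomputable def elosgn (b : Bool) : ℝ := if b then 1 else -1

lemma elosgn_inj : Function.Injective elosgn := by
  intro a b hab
  cases a <;> cases b <;> simp [elosgn] at hab ⊢ <;> norm_num at hab

open scoped Classical in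
lemma elo_sum_sgn {ℓ : ℕ} (h : Fin ℓ → Bool) :
    ∑ j, elosgn (h j) = 2 * ((univ.filter (fun j => h j = true)).card : ℝ) - ℓ := by
  have h1 : ∀ j, elosgn (h j) = 2 * (if h j = true then (1:ℝ) else 0) - 1 := by
    intro j; cases hj : h j <;> simp [elosgn] <;> norm_num
  rw [Finset.sum_congr rfl fun j _ => h1 j, Finset.sum_sub_distrib, ← Finset.mul_sum,
    Finset.sum_boole]
  simp

open scoped Classical in
lemma elo_count (ℓ : ℕ) (c : ℝ) :
    (univ.filter (fun h : Fin ℓ → Bool => ∑ j, elosgn (h j) = c)).card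
      ≤ ℓ.choose (ℓ / 2) := by
  set T := univ.filter (fun h : Fin ℓ → Bool => ∑ j, elosgn (h j) = c) with hT
  rcases T.eq_empty_or_nonempty with he | ⟨h₀, hh₀⟩
  · simp [he]
  set k := (univ.filter (fun j => h₀ j = true)).card with hk
  have key : ∀ h ∈ T, (univ.filter (fun j => h j = true)).card = k := by
    intro h hh
    rw [hT, mem_filter] at hh hh₀
    have := (elo_sum_sgn h).symm.trans (hh.2.trans (hh₀.2.symm.trans (elo_sum_sgn h₀)))
    have : ((univ.filter (fun j => h j = true)).card : ℝ) = k := by linarith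
    exact_mod_cast this
  calc T.card ≤ ((univ : Finset (Fin ℓ)).powersetCard k).card := by
        apply Finset.card_le_card_of_injOn (fun h => univ.filter (fun j => h j = true))
        · intro h hh
          rw [Finset.mem_coe, Finset.mem_powersetCard]
          exact ⟨Finset.filter_subset _ _, key h hh⟩
        · intro h _ h' _ hfe
          funext j
          have := Finset.ext_iff.1 hfe j
          simp only [mem_filter, mem_univ, true_and] at this
          cases hj : h j
          · cases hj' : h' j
            · rfl
            · exact absurd (this.2 hj') (by simp [hj])
          · exact (this.1 hj).symm
    _ = ℓ.choose k := by rw [Finset.card_powersetCard, Finset.card_univ, Fintype.card_fin]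
    _ ≤ ℓ.choose (ℓ / 2) := Nat.choose_le_middle k ℓ

lemma elo_mulVec_eq_sum {m n : ℕ} (A : Matrix (Fin m) (Fin n) ℝ) (v : Fin n → ℝ) :
    A.mulVec v = ∑ i, v i • (Aᵀ i) := by
  funext k
  simp [Matrix.mulVec, dotProduct, Finset.sum_apply, Matrix.transpose_apply, mul_comm]

lemma elo_unique {m n : ℕ} (A : Matrix (Fin m) (Fin n) ℝ) (S : Finset (Fin n))
    (hli : LinearIndependent ℝ (fun i : S => (Aᵀ i.1)))
    (y z : Fin n → ℝ) (hout : ∀ i ∉ S, y i = z i)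
    (h : A.mulVec y = A.mulVec z) : y = z := by
  have hsum : ∑ i : S, (y i.1 - z i.1) • (Aᵀ i.1) = 0 := by
    have h2 : A.mulVec (y - z) = 0 := by
      rw [Matrix.mulVec_sub, h, sub_self]
    rw [elo_mulVec_eq_sum] at h2
    have h3 : ∑ i, (y i - z i) • (Aᵀ i) = ∑ i ∈ S, (y i - z i) • (Aᵀ i) := by
      apply (Finset.sum_subset (Finset.subset_univ S) _).symm
      intro i _ hi
      rw [hout i hi]
      simp
    rw [← Finset.sum_attach S (fun i => (y i - z i) • (Aᵀ i))] at h3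
    have : y - z = fun i => y i - z i := rfl
    rw [this] at h2
    rw [h2] at h3
    exact h3.symm
  have hz := linearIndependent_iff'.1 hli Finset.univ (fun i => y i.1 - z i.1) hsum
  funext i
  by_cases hi : i ∈ S
  · have := hz ⟨i, hi⟩ (Finset.mem_univ _)
    have h5 : y i - z i = 0 := this
    linarith
  · exact hout i hi

lemma elo_exists_S {m n : ℕ} (A : Matrix (Fin m) (Fin n) ℝ) :
    ∃ S : Finset (Fin n), S.card = A.rank ∧
      LinearIndependent ℝ (fun i : S => (Aᵀ i.1)) := by
  classical
  obtain ⟨b, hbsub, hbspan, hbli⟩ := exists_linearIndependent ℝ (Set.range Aᵀ)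
  have hbfin : b.Finite := (Set.finite_range Aᵀ).subset hbsub
  haveI : Fintype b := hbfin.fintype
  have hrank : A.rank = b.toFinset.card := by
    rw [Matrix.rank_eq_finrank_span_cols]
    change Module.finrank ℝ (Submodule.span ℝ (Set.range Aᵀ)) = _
    rw [← hbspan,
      finrank_span_set_eq_card hbli]
  have hchoice : ∀ v : b, ∃ i : Fin n, Aᵀ i = v.1 := fun v => hbsub v.2
  choose f hf using hchoice
  have hfinj : Function.Injective f := by
    intro v w hvw
    apply Subtype.ext
    rw [← hf v, ← hf w, hvw]
  refine ⟨Finset.univ.image f, ?_, ?_⟩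
  · rw [Finset.card_image_of_injective _ hfinj, Finset.card_univ, hrank,
      Set.toFinset_card]
  · set S := Finset.univ.image f with hS
    have hmem : ∀ i : S, Aᵀ i.1 ∈ b := by
      rintro ⟨i, hi⟩
      rw [hS, Finset.mem_image] at hi
      obtain ⟨v, _, rfl⟩ := hi
      rw [hf v]
      exact v.2
    set e : S → b := fun i => ⟨Aᵀ i.1, hmem i⟩ with he
    have heinj : Function.Injective e := by
      rintro ⟨i, hi⟩ ⟨i', hi'⟩ hee
      rw [hS, Finset.mem_image] at hi hi'
      obtain ⟨v, _, rfl⟩ := hi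
      obtain ⟨v', _, rfl⟩ := hi'
      have : Aᵀ (f v) = Aᵀ (f v') := congrArg Subtype.val hee
      rw [hf v, hf v'] at this
      exact Subtype.ext (congrArg f (Subtype.ext this))
    have : (fun i : S => Aᵀ i.1) = (fun v : b => (v : Fin m → ℝ)) ∘ e := rfl
    rw [this]
    exact hbli.comp e heinj

open scoped Classical in
lemma elo_master {m n : ℕ} (ℓ : ℕ) (A : Matrix (Fin m) (Fin n) ℝ) (u : Fin m → ℝ)
    (S : Finset (Fin n)) (hli : LinearIndependent ℝ (fun i : S => (Aᵀ i.1))) :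
    (univ.filter (fun g : Fin n → Fin ℓ → Bool =>
        A.mulVec (fun i => ∑ j, elosgn (g i j)) = u)).card
      ≤ 2 ^ (ℓ * (n - S.card)) * (ℓ.choose (ℓ / 2)) ^ S.card := by
  set M := ℓ.choose (ℓ / 2) with hM
  set T := univ.filter (fun g : Fin n → Fin ℓ → Bool =>
      A.mulVec (fun i => ∑ j, elosgn (g i j)) = u) with hTdef
  set res : (Fin n → Fin ℓ → Bool) → ({i : Fin n // i ∉ S} → Fin ℓ → Bool) :=
    fun g i => g i.1 with hres
  have hsplit : T.card = ∑ w : {i : Fin n // i ∉ S} → Fin ℓ → Bool,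
      (T.filter (fun g => res g = w)).card :=
    Finset.card_eq_sum_card_fiberwise (fun x _ => Finset.mem_univ (res x))
  have hfiber : ∀ w, (T.filter (fun g => res g = w)).card ≤ M ^ S.card := by
    intro w
    rcases (T.filter (fun g => res g = w)).eq_empty_or_nonempty with he | ⟨g₀, hg₀⟩
    · simp [he]
    rw [Finset.mem_filter] at hg₀
    obtain ⟨hg₀T, hg₀w⟩ := hg₀
    rw [hTdef, Finset.mem_filter] at hg₀T
    calc (T.filter (fun g => res g = w)).card
        ≤ (Fintype.piFinset (fun i : S => univ.filter
            (fun h : Fin ℓ → Bool => ∑ j, elosgn (h j) = ∑ j, elosgn (g₀ i.1 j)))).card := by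
          apply Finset.card_le_card_of_injOn (fun g => fun i : S => g i.1)
          · intro g hg
            rw [Finset.mem_coe, Finset.mem_filter] at hg
            obtain ⟨hgT, hgw⟩ := hg
            rw [hTdef, Finset.mem_filter] at hgT
            have hout : ∀ i ∉ S, (fun i => ∑ j, elosgn (g i j)) i
                = (fun i => ∑ j, elosgn (g₀ i j)) i := by
              intro i hi
              have : g i = g₀ i := by
                have := congrFun (hgw.trans hg₀w.symm) ⟨i, hi⟩
                exact this
              simp only [this]
            have := elo_unique A S hli _ _ hout (hgT.2.trans hgT.2.symm ▸ hgT.2.trans hg₀T.2.symm)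
            rw [Finset.mem_coe, Fintype.mem_piFinset]
            intro i
            rw [Finset.mem_filter]
            exact ⟨Finset.mem_univ _, congrFun this i.1⟩
          · intro g hg g' hg' hgg
            rw [Finset.mem_coe, Finset.mem_filter] at hg hg'
            funext i
            by_cases hi : i ∈ S
            · exact congrFun hgg ⟨i, hi⟩
            · exact (congrFun hg.2 ⟨i, hi⟩).trans (congrFun hg'.2 ⟨i, hi⟩).symm
      _ = ∏ i : S, (univ.filter
            (fun h : Fin ℓ → Bool => ∑ j, elosgn (h j) = ∑ j, elosgn (g₀ i.1 j))).card := by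
          rw [Fintype.card_piFinset]
      _ ≤ ∏ _i : S, M := Finset.prod_le_prod' (fun i _ => elo_count ℓ _)
      _ = M ^ S.card := by rw [Finset.prod_const, Finset.card_univ, Fintype.card_coe]
  calc T.card ≤ ∑ _w : {i : Fin n // i ∉ S} → Fin ℓ → Bool, M ^ S.card := by
        rw [hsplit]; exact Finset.sum_le_sum (fun w _ => hfiber w)
    _ = 2 ^ (ℓ * (n - S.card)) * M ^ S.card := by
        rw [Finset.sum_const, Finset.card_univ, smul_eq_mul]
        congr 1
        rw [Fintype.card_fun, Fintype.card_fun, Fintype.card_bool, Fintype.card_fin,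
          Fintype.card_subtype_compl, Fintype.card_fin, Fintype.card_coe, ← pow_mul,
          mul_comm ℓ]

lemma elo_swap {m n ℓ : ℕ} (A : Matrix (Fin m) (Fin n) ℝ) (X : Fin ℓ → Fin n → ℝ) :
    ∑ j, A.mulVec (X j) = A.mulVec (fun i => ∑ j, X j i) := by
  funext k
  simp only [Finset.sum_apply, Matrix.mulVec, dotProduct, Finset.mul_sum]
  exact Finset.sum_comm

theorem stmt_6 (m n ℓ r : ℕ) (hmn : m ≤ n) (A : Matrix (Fin m) (Fin n) ℝ)
    (hr : A.rank = r) (u : Fin m → ℝ) :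
    (Set.ncard {X : Fin ℓ → Fin n → ℝ |
        (∀ j i, X j i = 1 ∨ X j i = -1) ∧ ∑ j, A.mulVec (X j) = u} : ℝ)
        / 2 ^ (n * ℓ)
      ≤ ((1 / 2 ^ ℓ : ℝ) * (ℓ.choose (ℓ / 2) : ℝ)) ^ r := by
  classical
  obtain ⟨S, hScard, hli⟩ := elo_exists_S A
  rw [hr] at hScard
  set M := ℓ.choose (ℓ / 2) with hM
  set T := univ.filter (fun g : Fin n → Fin ℓ → Bool =>
      A.mulVec (fun i => ∑ j, elosgn (g i j)) = u) with hTdef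
  set Θ : (Fin n → Fin ℓ → Bool) → (Fin ℓ → Fin n → ℝ) :=
    fun g j i => elosgn (g i j) with hΘ
  have hΘinj : Function.Injective Θ := by
    intro g g' hgg
    funext i j
    exact elosgn_inj (congrFun (congrFun hgg j) i)
  have hsets : {X : Fin ℓ → Fin n → ℝ |
      (∀ j i, X j i = 1 ∨ X j i = -1) ∧ ∑ j, A.mulVec (X j) = u} = Θ '' ↑T := by
    ext X
    constructor
    · rintro ⟨hX1, hX2⟩
      refine ⟨fun i j => if X j i = 1 then true else false, ?_, ?_⟩
      · rw [Finset.mem_coe, hTdef, Finset.mem_filter]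
        refine ⟨Finset.mem_univ _, ?_⟩
        have hex : ∀ i j, elosgn (if X j i = 1 then true else false) = X j i := by
          intro i j
          rcases hX1 j i with h | h
          · simp [h, elosgn]
          · rw [h, if_neg (by norm_num : ¬ (-1:ℝ) = 1)]
            simp [elosgn, h]
        rw [← hX2, elo_swap]
        refine congrArg A.mulVec ?_
        funext i
        exact Finset.sum_congr rfl (fun j _ => hex i j)
      · funext j i
        show elosgn (if X j i = 1 then true else false) = X j i
        rcases hX1 j i with h | h
        · simp [h, elosgn]
        · rw [h, if_neg (by norm_num : ¬ (-1:ℝ) = 1)]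
          simp [elosgn, h]
    · rintro ⟨g, hg, rfl⟩
      rw [Finset.mem_coe, hTdef, Finset.mem_filter] at hg
      constructor
      · intro j i
        cases h : g i j <;> simp [hΘ, h, elosgn]
      · rw [elo_swap]
        exact hg.2
  have hncard : Set.ncard {X : Fin ℓ → Fin n → ℝ |
      (∀ j i, X j i = 1 ∨ X j i = -1) ∧ ∑ j, A.mulVec (X j) = u} = T.card := by
    rw [hsets, Set.ncard_image_of_injective _ hΘinj, Set.ncard_coe_finset]
  have hmaster := elo_master ℓ A u S hli
  rw [hScard] at hmaster
  have hrn : r ≤ n := by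
    rw [← hr]
    exact (Matrix.rank_le_height A).trans hmn
  have hexp : n * ℓ = ℓ * (n - r) + ℓ * r := by
    rw [← Nat.mul_add, Nat.sub_add_cancel hrn, Nat.mul_comm]
  have hkey : ((T.card : ℝ)) ≤ 2 ^ (ℓ * (n - r)) * (M : ℝ) ^ r := by
    exact_mod_cast hmaster
  have hrhs : ((1 / 2 ^ ℓ : ℝ) * (M : ℝ)) ^ r
      = (2 : ℝ) ^ (ℓ * (n - r)) * (M : ℝ) ^ r / 2 ^ (n * ℓ) := by
    rw [hexp, pow_add, mul_div_mul_left _ _ (by positivity : (2:ℝ) ^ (ℓ * (n - r)) ≠ 0),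
      one_div, inv_mul_eq_div, div_pow, ← pow_mul]
  rw [hncard, hrhs]
  gcongr
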